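/- arXiv:2405.11615 — 2 statements merged into one kernel-verified Lean document; each statement's English description precedes it below -/
import Mathlib

section
/- For square-integrable vector-valued functions Z : [a,b] → ℝ^m with zero componentwise integral and W : [c,d] → ℝⁿ with zero componentwise integral, and Z̄ ∈ ℝ^{m×n}, the squared L²-norm of s_int(x,y) = Z(x)ᵀ Z̄ W(y) equals vec(Z̄)ᵀ (M_W ⊗ M_Z) vec(Z̄), where M_Z = ∫_a^b Z(x) Z(x)ᵀ dx and M_W = ∫_c^d W(y) W(y)ᵀ dy and ⊗ is the Kronecker product. -/
open MeasureTheory Matrix Kronecker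

private lemma memL2_integrable_mul {α : Type*} [MeasurableSpace α] {μ : Measure α}
    {f g : α → ℝ} (hf : MemLp f 2 μ) (hg : MemLp g 2 μ) :
    Integrable (fun x => f x * g x) μ := by
  have h1 := (hf.add hg).integrable_sq
  simp only [Pi.add_apply] at h1
  have h2 := hf.integrable_sq
  have h3 := hg.integrable_sq
  have h4 := ((h1.sub h2).sub h3).div_const 2
  have hfe : (fun x => f x * g x) =
      fun x => ((f x + g x) ^ 2 - f x ^ 2 - g x ^ 2) / 2 := by
    funext x; ring
  rw [hfe]
  exact h4

/-- Theorem A.2 (zb_norm): the squared `L²`-norm of the interactive part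
`s_int(x,y) = Z(x)ᵀ Z̄ W(y)` equals `vec(Z̄)ᵀ (M_W ⊗ M_Z) vec(Z̄)` with the Gram
matrices `M_Z = ∫ Z Zᵀ` and `M_W = ∫ W Wᵀ`. -/
theorem zb_interactive_norm (a b c d : ℝ) (hab : a < b) (hcd : c < d)
    (m n : ℕ) (Z : Fin m → ℝ → ℝ) (W : Fin n → ℝ → ℝ)
    (Zbar : Matrix (Fin m) (Fin n) ℝ)
    (hZL2 : ∀ i, MemLp (Z i) 2 (volume.restrict (Set.Icc a b)))
    (hWL2 : ∀ j, MemLp (W j) 2 (volume.restrict (Set.Icc c d)))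
    (hZ0 : ∀ i, ∫ x in a..b, Z i x = 0)
    (hW0 : ∀ j, ∫ y in c..d, W j y = 0) :
    ∫ p in Set.Icc a b ×ˢ Set.Icc c d,
      (∑ i, ∑ j, Z i p.1 * Zbar i j * W j p.2) ^ 2 =
    (fun q : Fin n × Fin m => Zbar q.2 q.1) ⬝ᵥ
      (((Matrix.of fun j j' : Fin n => ∫ y in c..d, W j y * W j' y) ⊗ₖ
        (Matrix.of fun i i' : Fin m => ∫ x in a..b, Z i x * Z i' x)).mulVec
          (fun q : Fin n × Fin m => Zbar q.2 q.1)) := by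
  have hab' := hab.le
  have hcd' := hcd.le
  have hZint : ∀ i i' : Fin m,
      Integrable (fun x => Z i x * Z i' x) (volume.restrict (Set.Icc a b)) :=
    fun i i' => memL2_integrable_mul (hZL2 i) (hZL2 i')
  have hWint : ∀ j j' : Fin n,
      Integrable (fun y => W j y * W j' y) (volume.restrict (Set.Icc c d)) :=
    fun j j' => memL2_integrable_mul (hWL2 j) (hWL2 j')
  have hmeas : (volume : Measure (ℝ × ℝ)).restrict (Set.Icc a b ×ˢ Set.Icc c d) =
      (volume.restrict (Set.Icc a b)).prod (volume.restrict (Set.Icc c d)) := by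
    rw [Measure.volume_eq_prod, Measure.prod_restrict]
  have hint : ∀ (i i' : Fin m) (j j' : Fin n),
      Integrable (fun p : ℝ × ℝ =>
        Zbar i j * Zbar i' j' * ((Z i p.1 * Z i' p.1) * (W j p.2 * W j' p.2)))
        ((volume : Measure (ℝ × ℝ)).restrict (Set.Icc a b ×ˢ Set.Icc c d)) := by
    intro i i' j j'
    rw [hmeas]
    exact ((hZint i i').mul_prod (hWint j j')).const_mul _
  have key : ∀ (i i' : Fin m) (j j' : Fin n),
      ∫ p in Set.Icc a b ×ˢ Set.Icc c d,
        (Z i p.1 * Z i' p.1) * (W j p.2 * W j' p.2)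
      = (∫ x in Set.Icc a b, Z i x * Z i' x) *
        (∫ y in Set.Icc c d, W j y * W j' y) := by
    intro i i' j j'
    rw [hmeas]
    exact integral_prod_mul (fun x => Z i x * Z i' x) (fun y => W j y * W j' y)
  have hsq : ∀ p : ℝ × ℝ,
      (∑ i, ∑ j, Z i p.1 * Zbar i j * W j p.2) ^ 2 =
      ∑ j, ∑ j', ∑ i, ∑ i',
        Zbar i j * Zbar i' j' * ((Z i p.1 * Z i' p.1) * (W j p.2 * W j' p.2)) := by
    intro p
    rw [Finset.sum_comm, sq, Finset.sum_mul_sum]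
    refine Finset.sum_congr rfl fun j _ => Finset.sum_congr rfl fun j' _ => ?_
    rw [Finset.sum_mul_sum]
    exact Finset.sum_congr rfl fun i _ => Finset.sum_congr rfl fun i' _ => by ring
  have hL : (∫ p in Set.Icc a b ×ˢ Set.Icc c d,
      (∑ i, ∑ j, Z i p.1 * Zbar i j * W j p.2) ^ 2) =
      ∑ j, ∑ j', ∑ i, ∑ i',
        Zbar i j * Zbar i' j' *
          ((∫ x in Set.Icc a b, Z i x * Z i' x) *
           (∫ y in Set.Icc c d, W j y * W j' y)) := by
    simp only [hsq]
    rw [integral_finset_sum _ (fun j _ => integrable_finset_sum _ fun j' _ =>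
      integrable_finset_sum _ fun i _ => integrable_finset_sum _ fun i' _ =>
        hint i i' j j')]
    refine Finset.sum_congr rfl fun j _ => ?_
    rw [integral_finset_sum _ (fun j' _ => integrable_finset_sum _ fun i _ =>
      integrable_finset_sum _ fun i' _ => hint i i' j j')]
    refine Finset.sum_congr rfl fun j' _ => ?_
    rw [integral_finset_sum _ (fun i _ => integrable_finset_sum _ fun i' _ =>
      hint i i' j j')]
    refine Finset.sum_congr rfl fun i _ => ?_
    rw [integral_finset_sum _ (fun i' _ => hint i i' j j')]
    refine Finset.sum_congr rfl fun i' _ => ?_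
    rw [integral_const_mul, key]
  rw [hL]
  have hZiv : ∀ i i' : Fin m,
      (∫ x in a..b, Z i x * Z i' x) = ∫ x in Set.Icc a b, Z i x * Z i' x := by
    intro i i'
    rw [intervalIntegral.integral_of_le hab', MeasureTheory.integral_Icc_eq_integral_Ioc]
  have hWiv : ∀ j j' : Fin n,
      (∫ y in c..d, W j y * W j' y) = ∫ y in Set.Icc c d, W j y * W j' y := by
    intro j j'
    rw [intervalIntegral.integral_of_le hcd', MeasureTheory.integral_Icc_eq_integral_Ioc]
  simp only [dotProduct, Matrix.mulVec, Matrix.kroneckerMap_apply, Matrix.of_apply,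
    Fintype.sum_prod_type, hZiv, hWiv, Finset.mul_sum, Finset.sum_mul]
  refine Finset.sum_congr rfl fun j _ => ?_
  rw [Finset.sum_comm]
  refine Finset.sum_congr rfl fun i _ => ?_
  refine Finset.sum_congr rfl fun j' _ => ?_
  refine Finset.sum_congr rfl fun i' _ => ?_
  ring
end

section
/- For h, k ∈ L²(Ω) on Ω = [a,b] × [c,d] both with zero integral, the decomposition h = h₁ + h₂ + h_int (into the two clr marginals and the interactive part) is an orthogonal decomposition: ⟨h₁, h₂⟩ = ⟨h₁, h_int⟩ = ⟨h₂, h_int⟩ = 0 in L²(Ω), where h₁(x,y) = (1/(d−c)) ∫_c^d h(x,t) dt, h₂(x,y) = (1/(b−a)) ∫_a^b h(s,y) ds, and h_int = h − h₁ − h₂. -/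
open MeasureTheory

open scoped ENNReal

private lemma L2mul {α : Type*} [MeasurableSpace α] {m : Measure α} {f g : α → ℝ}
    (hf : MemLp f 2 m) (hg : MemLp g 2 m) : Integrable (fun x => f x * g x) m := by
  have hpqr : (1 : ℝ≥0∞) / 1 = 1 / 2 + 1 / 2 := by
    rw [ENNReal.div_add_div_same, one_add_one_eq_two,
      ENNReal.div_self two_ne_zero ENNReal.ofNat_ne_top, one_div_one]
  have := (hf.smul hg : MemLp (g • f) 1 m)
  have := memLp_one_iff_integrable.1 this
  simpa [Pi.smul_apply', smul_eq_mul, mul_comm, Pi.mul_def] using this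

private lemma sq_integral_le {ν : Measure ℝ} [IsFiniteMeasure ν] {f : ℝ → ℝ}
    (hf : Integrable f ν) (hf2 : Integrable (fun y => f y ^ 2) ν) :
    (∫ y, f y ∂ν) ^ 2 ≤ (ν Set.univ).toReal * ∫ y, f y ^ 2 ∂ν := by
  have hmem : MemLp f 2 ν := (memLp_two_iff_integrable_sq hf.1).2 hf2
  have hone : MemLp (fun _ : ℝ => (1 : ℝ)) 2 ν := memLp_const 1
  have hconj : (2 : ℝ).HolderConjugate 2 := Real.holderConjugate_iff.mpr ⟨one_lt_two, by norm_num⟩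
  have h2 : ENNReal.ofReal (2 : ℝ) = 2 := by norm_num
  have key := integral_mul_norm_le_Lp_mul_Lq (μ := ν) hconj (h2 ▸ hone) (h2 ▸ hmem)
  have hA : (∫ a, ‖(1 : ℝ)‖ ^ (2 : ℝ) ∂ν) = (ν Set.univ).toReal := by
    simp [Measure.real]
  have hB : (∫ a, ‖f a‖ ^ (2 : ℝ) ∂ν) = ∫ a, f a ^ 2 ∂ν := by
    refine integral_congr_ae (Filter.Eventually.of_forall fun a => ?_)
    show ‖f a‖ ^ (2 : ℝ) = f a ^ 2
    rw [show ((2:ℝ)) = ((2:ℕ):ℝ) by norm_num, Real.rpow_natCast]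
    simp [sq_abs]
  rw [hA, hB] at key
  have hC : (∫ a, ‖(1:ℝ)‖ * ‖f a‖ ∂ν) = ∫ a, ‖f a‖ ∂ν := by simp
  rw [hC] at key
  have habs : |∫ y, f y ∂ν| ≤ ∫ a, ‖f a‖ ∂ν := by
    simpa using norm_integral_le_integral_norm (μ := ν) f
  set T := (ν Set.univ).toReal with hT
  set B := ∫ a, f a ^ 2 ∂ν with hBdef
  have hTnn : 0 ≤ T := ENNReal.toReal_nonneg
  have hBnn : 0 ≤ B := integral_nonneg fun a => sq_nonneg _
  have hstep : |∫ y, f y ∂ν| ≤ T ^ ((1:ℝ)/2) * B ^ ((1:ℝ)/2) := habs.trans key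
  have hsq : (T ^ ((1:ℝ)/2) * B ^ ((1:ℝ)/2)) ^ 2 = T * B := by
    rw [mul_pow, ← Real.rpow_natCast (T ^ ((1:ℝ)/2)) 2, ← Real.rpow_natCast (B ^ ((1:ℝ)/2)) 2,
      ← Real.rpow_mul hTnn, ← Real.rpow_mul hBnn]
    norm_num
  calc (∫ y, f y ∂ν) ^ 2 = |∫ y, f y ∂ν| ^ 2 := (sq_abs _).symm
    _ ≤ (T ^ ((1:ℝ)/2) * B ^ ((1:ℝ)/2)) ^ 2 := by
        exact pow_le_pow_left₀ (abs_nonneg _) hstep 2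
    _ = T * B := hsq

private theorem clr_key {μ ν : Measure ℝ} [IsFiniteMeasure μ] [IsFiniteMeasure ν]
    {h : ℝ × ℝ → ℝ} (hL2 : MemLp h 2 (μ.prod ν))
    (hzero : ∫ p, h p ∂(μ.prod ν) = 0) (k1 k2 : ℝ)
    (hk1 : (ν Set.univ).toReal * k1 = 1) (hk2 : (μ Set.univ).toReal * k2 = 1)
    (H1 H2 : ℝ → ℝ) (hH1 : ∀ x, H1 x = ∫ t, h (x, t) ∂ν)
    (hH2 : ∀ y, H2 y = ∫ s, h (s, y) ∂μ) :
    (∫ p, (k1 * H1 p.1) * (k2 * H2 p.2) ∂(μ.prod ν) = 0) ∧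
    (∫ p, (k1 * H1 p.1) * (h p - k1 * H1 p.1 - k2 * H2 p.2) ∂(μ.prod ν) = 0) ∧
    (∫ p, (k2 * H2 p.2) * (h p - k1 * H1 p.1 - k2 * H2 p.2) ∂(μ.prod ν) = 0) := by
  have hH1' : H1 = fun x => ∫ t, h (x, t) ∂ν := funext hH1
  have hH2' : H2 = fun y => ∫ s, h (s, y) ∂μ := funext hH2
  subst hH1' hH2'
  have hInt : Integrable h (μ.prod ν) := hL2.integrable one_le_two
  have hsq : Integrable (fun p => h p ^ 2) (μ.prod ν) := hL2.integrable_sq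
  have hH1int : Integrable (fun x => ∫ t, h (x, t) ∂ν) μ := hInt.integral_prod_left
  have hH2int : Integrable (fun y => ∫ s, h (s, y) ∂μ) ν := hInt.integral_prod_right
  -- square integrability of the marginals
  have hH1sq : Integrable (fun x => (∫ t, h (x, t) ∂ν) ^ 2) μ := by
    refine ((hsq.integral_prod_left.const_mul ((ν Set.univ).toReal))).mono' ?_ ?_
    · simpa only [← pow_two, Pi.pow_def] using hH1int.1.mul hH1int.1
    · filter_upwards [hInt.prod_right_ae, hsq.prod_right_ae] with x hx1 hx2
      rw [Real.norm_of_nonneg (sq_nonneg _)]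
      exact sq_integral_le hx1 hx2
  have hH2sq : Integrable (fun y => (∫ s, h (s, y) ∂μ) ^ 2) ν := by
    refine ((hsq.integral_prod_right.const_mul ((μ Set.univ).toReal))).mono' ?_ ?_
    · simpa only [← pow_two, Pi.pow_def] using hH2int.1.mul hH2int.1
    · filter_upwards [hInt.prod_left_ae, hsq.prod_left_ae] with y hy1 hy2
      rw [Real.norm_of_nonneg (sq_nonneg _)]
      exact sq_integral_le hy1 hy2
  -- MemLp of lifted marginals
  have hg1 : MemLp (fun p : ℝ × ℝ => ∫ t, h (p.1, t) ∂ν) 2 (μ.prod ν) := by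
    refine (memLp_two_iff_integrable_sq hH1int.1.comp_fst).2 ?_
    simpa using hH1sq.mul_prod (integrable_const (1 : ℝ))
  have hg2 : MemLp (fun p : ℝ × ℝ => ∫ s, h (s, p.2) ∂μ) 2 (μ.prod ν) := by
    refine (memLp_two_iff_integrable_sq hH2int.1.comp_snd).2 ?_
    simpa using (integrable_const (1 : ℝ)).mul_prod hH2sq
  have hg1' : MemLp (fun p : ℝ × ℝ => k1 * ∫ t, h (p.1, t) ∂ν) 2 (μ.prod ν) := hg1.const_mul k1
  have hg2' : MemLp (fun p : ℝ × ℝ => k2 * ∫ s, h (s, p.2) ∂μ) 2 (μ.prod ν) := hg2.const_mul k2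
  -- marginals integrate to zero
  have hH1zero : ∫ x, (∫ t, h (x, t) ∂ν) ∂μ = 0 := (integral_prod h hInt).symm.trans hzero
  have hH2zero : ∫ y, (∫ s, h (s, y) ∂μ) ∂ν = 0 :=
    (integral_prod_symm h hInt).symm.trans hzero
  -- cross integral vanishes
  have I0 : ∫ p, (k1 * ∫ t, h (p.1, t) ∂ν) * (k2 * ∫ s, h (s, p.2) ∂μ) ∂(μ.prod ν) = 0 := by
    calc ∫ p, (k1 * ∫ t, h (p.1, t) ∂ν) * (k2 * ∫ s, h (s, p.2) ∂μ) ∂(μ.prod ν)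
        = (∫ x, k1 * ∫ t, h (x, t) ∂ν ∂μ) * ∫ y, k2 * ∫ s, h (s, y) ∂μ ∂ν :=
          integral_prod_mul (μ := μ) (ν := ν) (fun x => k1 * ∫ t, h (x, t) ∂ν)
            (fun y => k2 * ∫ s, h (s, y) ∂μ)
      _ = 0 := by rw [integral_const_mul, integral_const_mul, hH1zero, mul_zero, zero_mul]
  -- integrability of products
  have hint1 : Integrable (fun p => (k1 * ∫ t, h (p.1, t) ∂ν) * h p) (μ.prod ν) :=
    L2mul hg1' hL2
  have hint11 : Integrable
      (fun p => (k1 * ∫ t, h (p.1, t) ∂ν) * (k1 * ∫ t, h (p.1, t) ∂ν)) (μ.prod ν) :=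
    L2mul hg1' hg1'
  have hint12 : Integrable
      (fun p => (k1 * ∫ t, h (p.1, t) ∂ν) * (k2 * ∫ s, h (s, p.2) ∂μ)) (μ.prod ν) :=
    L2mul hg1' hg2'
  have hint2 : Integrable (fun p => (k2 * ∫ s, h (s, p.2) ∂μ) * h p) (μ.prod ν) :=
    L2mul hg2' hL2
  have hint22 : Integrable
      (fun p => (k2 * ∫ s, h (s, p.2) ∂μ) * (k2 * ∫ s, h (s, p.2) ∂μ)) (μ.prod ν) :=
    L2mul hg2' hg2'
  -- ⟨h1, h⟩ = k1 ∫ H1²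
  have Ih1 : ∫ p, (k1 * ∫ t, h (p.1, t) ∂ν) * h p ∂(μ.prod ν)
      = k1 * ∫ x, (∫ t, h (x, t) ∂ν) ^ 2 ∂μ := by
    calc ∫ p, (k1 * ∫ t, h (p.1, t) ∂ν) * h p ∂(μ.prod ν)
        = ∫ x, ∫ y, (k1 * ∫ t, h (x, t) ∂ν) * h (x, y) ∂ν ∂μ := integral_prod _ hint1
      _ = ∫ x, k1 * (∫ t, h (x, t) ∂ν) ^ 2 ∂μ := by
          refine integral_congr_ae (Filter.Eventually.of_forall fun x => ?_)
          dsimp only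
          rw [integral_const_mul]; ring
      _ = k1 * ∫ x, (∫ t, h (x, t) ∂ν) ^ 2 ∂μ := integral_const_mul _ _
  -- ⟨h1, h1⟩ = k1 ∫ H1²
  have I11 : ∫ p, (k1 * ∫ t, h (p.1, t) ∂ν) * (k1 * ∫ t, h (p.1, t) ∂ν) ∂(μ.prod ν)
      = k1 * ∫ x, (∫ t, h (x, t) ∂ν) ^ 2 ∂μ := by
    calc ∫ p, (k1 * ∫ t, h (p.1, t) ∂ν) * (k1 * ∫ t, h (p.1, t) ∂ν) ∂(μ.prod ν)
        = ∫ x, ∫ _y, (k1 * ∫ t, h (x, t) ∂ν) * (k1 * ∫ t, h (x, t) ∂ν) ∂ν ∂μ :=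
          integral_prod _ hint11
      _ = ∫ x, k1 * (∫ t, h (x, t) ∂ν) ^ 2 ∂μ := by
          refine integral_congr_ae (Filter.Eventually.of_forall fun x => ?_)
          dsimp only
          rw [integral_const, smul_eq_mul]
          calc (ν Set.univ).toReal * ((k1 * ∫ t, h (x, t) ∂ν) * (k1 * ∫ t, h (x, t) ∂ν))
              = ((ν Set.univ).toReal * k1) * (k1 * (∫ t, h (x, t) ∂ν) ^ 2) := by ring
            _ = k1 * (∫ t, h (x, t) ∂ν) ^ 2 := by rw [hk1, one_mul]
      _ = k1 * ∫ x, (∫ t, h (x, t) ∂ν) ^ 2 ∂μ := integral_const_mul _ _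
  -- ⟨h2, h⟩ = k2 ∫ H2²
  have Ih2 : ∫ p, (k2 * ∫ s, h (s, p.2) ∂μ) * h p ∂(μ.prod ν)
      = k2 * ∫ y, (∫ s, h (s, y) ∂μ) ^ 2 ∂ν := by
    calc ∫ p, (k2 * ∫ s, h (s, p.2) ∂μ) * h p ∂(μ.prod ν)
        = ∫ y, ∫ x, (k2 * ∫ s, h (s, y) ∂μ) * h (x, y) ∂μ ∂ν := integral_prod_symm _ hint2
      _ = ∫ y, k2 * (∫ s, h (s, y) ∂μ) ^ 2 ∂ν := by
          refine integral_congr_ae (Filter.Eventually.of_forall fun y => ?_)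
          dsimp only
          rw [integral_const_mul]; ring
      _ = k2 * ∫ y, (∫ s, h (s, y) ∂μ) ^ 2 ∂ν := integral_const_mul _ _
  -- ⟨h2, h2⟩ = k2 ∫ H2²
  have I22 : ∫ p, (k2 * ∫ s, h (s, p.2) ∂μ) * (k2 * ∫ s, h (s, p.2) ∂μ) ∂(μ.prod ν)
      = k2 * ∫ y, (∫ s, h (s, y) ∂μ) ^ 2 ∂ν := by
    calc ∫ p, (k2 * ∫ s, h (s, p.2) ∂μ) * (k2 * ∫ s, h (s, p.2) ∂μ) ∂(μ.prod ν)
        = ∫ y, ∫ _x, (k2 * ∫ s, h (s, y) ∂μ) * (k2 * ∫ s, h (s, y) ∂μ) ∂μ ∂ν :=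
          integral_prod_symm _ hint22
      _ = ∫ y, k2 * (∫ s, h (s, y) ∂μ) ^ 2 ∂ν := by
          refine integral_congr_ae (Filter.Eventually.of_forall fun y => ?_)
          dsimp only
          rw [integral_const, smul_eq_mul]
          calc (μ Set.univ).toReal * ((k2 * ∫ s, h (s, y) ∂μ) * (k2 * ∫ s, h (s, y) ∂μ))
              = ((μ Set.univ).toReal * k2) * (k2 * (∫ s, h (s, y) ∂μ) ^ 2) := by ring
            _ = k2 * (∫ s, h (s, y) ∂μ) ^ 2 := by rw [hk2, one_mul]
      _ = k2 * ∫ y, (∫ s, h (s, y) ∂μ) ^ 2 ∂ν := integral_const_mul _ _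
  refine ⟨I0, ?_, ?_⟩
  · calc ∫ p, (k1 * ∫ t, h (p.1, t) ∂ν) *
            (h p - k1 * ∫ t, h (p.1, t) ∂ν - k2 * ∫ s, h (s, p.2) ∂μ) ∂(μ.prod ν)
        = ∫ p, ((k1 * ∫ t, h (p.1, t) ∂ν) * h p
            - (k1 * ∫ t, h (p.1, t) ∂ν) * (k1 * ∫ t, h (p.1, t) ∂ν))
            - (k1 * ∫ t, h (p.1, t) ∂ν) * (k2 * ∫ s, h (s, p.2) ∂μ) ∂(μ.prod ν) := by
          refine integral_congr_ae (Filter.Eventually.of_forall fun p => ?_)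
          dsimp only; ring
      _ = (∫ p, (k1 * ∫ t, h (p.1, t) ∂ν) * h p
            - (k1 * ∫ t, h (p.1, t) ∂ν) * (k1 * ∫ t, h (p.1, t) ∂ν) ∂(μ.prod ν))
            - ∫ p, (k1 * ∫ t, h (p.1, t) ∂ν) * (k2 * ∫ s, h (s, p.2) ∂μ) ∂(μ.prod ν) :=
          integral_sub (hint1.sub hint11) hint12
      _ = ((∫ p, (k1 * ∫ t, h (p.1, t) ∂ν) * h p ∂(μ.prod ν))
            - ∫ p, (k1 * ∫ t, h (p.1, t) ∂ν) * (k1 * ∫ t, h (p.1, t) ∂ν) ∂(μ.prod ν))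
            - ∫ p, (k1 * ∫ t, h (p.1, t) ∂ν) * (k2 * ∫ s, h (s, p.2) ∂μ) ∂(μ.prod ν) := by
          exact congrArg (fun z => z - _) (integral_sub hint1 hint11)
      _ = 0 := by rw [Ih1, I11, I0]; ring
  · calc ∫ p, (k2 * ∫ s, h (s, p.2) ∂μ) *
            (h p - k1 * ∫ t, h (p.1, t) ∂ν - k2 * ∫ s, h (s, p.2) ∂μ) ∂(μ.prod ν)
        = ∫ p, ((k2 * ∫ s, h (s, p.2) ∂μ) * h p
            - (k1 * ∫ t, h (p.1, t) ∂ν) * (k2 * ∫ s, h (s, p.2) ∂μ))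
            - (k2 * ∫ s, h (s, p.2) ∂μ) * (k2 * ∫ s, h (s, p.2) ∂μ) ∂(μ.prod ν) := by
          refine integral_congr_ae (Filter.Eventually.of_forall fun p => ?_)
          dsimp only; ring
      _ = (∫ p, (k2 * ∫ s, h (s, p.2) ∂μ) * h p
            - (k1 * ∫ t, h (p.1, t) ∂ν) * (k2 * ∫ s, h (s, p.2) ∂μ) ∂(μ.prod ν))
            - ∫ p, (k2 * ∫ s, h (s, p.2) ∂μ) * (k2 * ∫ s, h (s, p.2) ∂μ) ∂(μ.prod ν) :=
          integral_sub (hint2.sub hint12) hint22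
      _ = ((∫ p, (k2 * ∫ s, h (s, p.2) ∂μ) * h p ∂(μ.prod ν))
            - ∫ p, (k1 * ∫ t, h (p.1, t) ∂ν) * (k2 * ∫ s, h (s, p.2) ∂μ) ∂(μ.prod ν))
            - ∫ p, (k2 * ∫ s, h (s, p.2) ∂μ) * (k2 * ∫ s, h (s, p.2) ∂μ) ∂(μ.prod ν) := by
          exact congrArg (fun z => z - _) (integral_sub hint2 hint12)
      _ = 0 := by rw [Ih2, I0, I22]; ring

/-- The decomposition `h = h₁ + h₂ + h_int` of an `L²` function with zero integral
on `Ω = [a,b] × [c,d]` into its two clr marginals and its interactive part is an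
orthogonal decomposition in `L²(Ω)`. -/
theorem clr_decomposition_orthogonal (a b c d : ℝ) (hab : a < b) (hcd : c < d)
    (h : ℝ × ℝ → ℝ)
    (hL2 : MemLp h 2 (volume.restrict (Set.Icc a b ×ˢ Set.Icc c d)))
    (hzero : ∫ p in Set.Icc a b ×ˢ Set.Icc c d, h p = 0) :
    (∫ p in Set.Icc a b ×ˢ Set.Icc c d,
        ((1 / (d - c)) * ∫ t in c..d, h (p.1, t)) *
        ((1 / (b - a)) * ∫ s in a..b, h (s, p.2)) = 0) ∧
    (∫ p in Set.Icc a b ×ˢ Set.Icc c d,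
        ((1 / (d - c)) * ∫ t in c..d, h (p.1, t)) *
        (h p - ((1 / (d - c)) * ∫ t in c..d, h (p.1, t))
             - ((1 / (b - a)) * ∫ s in a..b, h (s, p.2))) = 0) ∧
    (∫ p in Set.Icc a b ×ˢ Set.Icc c d,
        ((1 / (b - a)) * ∫ s in a..b, h (s, p.2)) *
        (h p - ((1 / (d - c)) * ∫ t in c..d, h (p.1, t))
             - ((1 / (b - a)) * ∫ s in a..b, h (s, p.2))) = 0) := by
  set μ := volume.restrict (Set.Icc a b) with hμ
  set ν := volume.restrict (Set.Icc c d) with hν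
  haveI : IsFiniteMeasure μ := by
    constructor
    rw [hμ, Measure.restrict_apply_univ, Real.volume_Icc]
    exact ENNReal.ofReal_lt_top
  haveI : IsFiniteMeasure ν := by
    constructor
    rw [hν, Measure.restrict_apply_univ, Real.volume_Icc]
    exact ENNReal.ofReal_lt_top
  have hprod : volume.restrict (Set.Icc a b ×ˢ Set.Icc c d) = μ.prod ν := by
    rw [hμ, hν, Measure.prod_restrict, ← Measure.volume_eq_prod]
  have hL2' : MemLp h 2 (μ.prod ν) := hprod ▸ hL2
  have hzero' : ∫ p, h p ∂(μ.prod ν) = 0 := hprod ▸ hzero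
  have hk1 : (ν Set.univ).toReal * (1 / (d - c)) = 1 := by
    rw [hν, Measure.restrict_apply_univ, Real.volume_Icc,
      ENNReal.toReal_ofReal (by linarith)]
    rw [mul_one_div, div_self (by linarith : d - c ≠ 0)]
  have hk2 : (μ Set.univ).toReal * (1 / (b - a)) = 1 := by
    rw [hμ, Measure.restrict_apply_univ, Real.volume_Icc,
      ENNReal.toReal_ofReal (by linarith)]
    rw [mul_one_div, div_self (by linarith : b - a ≠ 0)]
  have hH1 : ∀ x, (∫ t in c..d, h (x, t)) = ∫ t, h (x, t) ∂ν := by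
    intro x
    rw [intervalIntegral.integral_of_le hcd.le, hν]
    exact (integral_Icc_eq_integral_Ioc).symm
  have hH2 : ∀ y, (∫ s in a..b, h (s, y)) = ∫ s, h (s, y) ∂μ := by
    intro y
    rw [intervalIntegral.integral_of_le hab.le, hμ]
    exact (integral_Icc_eq_integral_Ioc).symm
  obtain ⟨G1, G2, G3⟩ := clr_key hL2' hzero' (1 / (d - c)) (1 / (b - a)) hk1 hk2
    (fun x => ∫ t in c..d, h (x, t)) (fun y => ∫ s in a..b, h (s, y)) hH1 hH2
  refine ⟨?_, ?_, ?_⟩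
  · rw [hprod]; exact G1
  · rw [hprod]; exact G2
  · rw [hprod]; exact G3
end
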